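/- There is a universal constant C > 0 such that for any n ∈ ℕ and any subset T of the unit sphere S^{n-1} ⊂ ℝⁿ, there exists a finite subset N ⊂ T of cardinality at most exp(C·n) such that every y ∈ T has some y' ∈ N with ‖y - y'‖_∞ ≤ n^{-1/2}. -/

import Mathlib

open Finset

private lemma choose_le_two_pow_aux (m k : ℕ) : m.choose k ≤ 2 ^ m := by
  rcases le_or_gt k m with h | h
  · calc m.choose k ≤ ∑ i ∈ Finset.range (m + 1), m.choose i :=
        Finset.single_le_sum (fun i _ => Nat.zero_le _)
          (Finset.mem_range.mpr (Nat.lt_succ_of_le h))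
    _ = 2 ^ m := Nat.sum_range_choose m
  · simp [Nat.choose_eq_zero_of_lt h]

/-- Counting lemma: the number of integer vectors `k : Fin n → ℤ` with `∑ |k j| ≤ 2n`
is at most `2^(4n)`. -/
private lemma card_lattice_le (n : ℕ)
    (K : Finset (Fin n → ℤ))
    (hK : ∀ k ∈ K, ∑ j, (k j).natAbs ≤ 2 * n) :
    K.card ≤ 2 ^ n * ((n + 1) + 2 * n - 1).choose (2 * n) := by
  classical
  -- encode signs and magnitudes
  set M : (Fin n → ℤ) → Multiset (Fin (n + 1)) := fun k =>
    (∑ j : Fin n, Multiset.replicate (k j).natAbs j.castSucc)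
      + Multiset.replicate (2 * n - ∑ j, (k j).natAbs) (Fin.last n) with hM
  have hcount : ∀ k : Fin n → ℤ, ∀ j : Fin n,
      (M k).count j.castSucc = (k j).natAbs := by
    intro k j
    rw [hM]
    simp only [Multiset.count_add, Multiset.count_replicate,
      Multiset.count_sum']
    have h1 : (Fin.castSucc j : Fin (n+1)) ≠ Fin.last n := (Fin.castSucc_lt_last j).ne
    rw [if_neg (Ne.symm h1), add_zero]
    have h2 : ∀ b : Fin n,
        (if (Fin.castSucc b : Fin (n+1)) = Fin.castSucc j then (k b).natAbs else 0)
          = if b = j then (k b).natAbs else 0 := by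
      intro b; simp [Fin.castSucc_inj]
    simp only [h2, Finset.sum_ite_eq', Finset.mem_univ, if_true]
  have hMcard : ∀ k ∈ K, Multiset.card (M k) = 2 * n := by
    intro k hk
    rw [hM]
    rw [Multiset.card_add, Multiset.card_replicate, Multiset.card_sum]
    simp only [Multiset.card_replicate]
    have := hK k hk
    omega
  set F : (Fin n → ℤ) → (Fin n → Bool) × Sym (Fin (n + 1)) (2 * n) := fun k =>
    (fun j => decide (k j < 0),
      if h : Multiset.card (M k) = 2 * n then ⟨M k, h⟩
      else Sym.replicate (2 * n) (Fin.last n)) with hF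
  have hinj : Set.InjOn F K := by
    intro k hk l hl hkl
    have h1 : (fun j => decide (k j < 0)) = fun j => decide (l j < 0) :=
      congrArg Prod.fst hkl
    have h2 := congrArg Prod.snd hkl
    rw [hF] at h2
    simp only [dif_pos (hMcard k hk), dif_pos (hMcard l hl)] at h2
    have hMeq : M k = M l := by
      have h3 := congrArg Subtype.val h2
      simpa [hMcard k hk, hMcard l hl] using h3
    funext j
    have hc : (k j).natAbs = (l j).natAbs := by
      rw [← hcount k j, ← hcount l j, hMeq]
    have hs : (k j < 0) = (l j < 0) := by
      have := congrFun h1 j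
      simpa using this
    have hs' : k j < 0 ↔ l j < 0 := by rw [← eq_iff_iff] ; exact hs
    omega
  calc K.card ≤ Fintype.card ((Fin n → Bool) × Sym (Fin (n + 1)) (2 * n)) := by
        have := Finset.card_le_card_of_injOn F (fun a _ => Finset.mem_univ (F a)) hinj
        simpa using this
    _ = 2 ^ n * ((n + 1) + 2 * n - 1).choose (2 * n) := by
        rw [Fintype.card_prod, Sym.card_sym_eq_choose]
        simp [Fintype.card_fin]

/-- There is a universal constant `C > 0` such that for any `n` and any
subset `T` of the unit Euclidean sphere in `ℝⁿ`, there is a finite subset `Net ⊆ T` of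
cardinality at most `exp (C n)` which is an `n^{-1/2}`-net in `T` for the sup-norm. -/
theorem exists_cube_net_in_sphere_subset :
    ∃ C : ℝ, 0 < C ∧
      ∀ (n : ℕ) (T : Set (Fin n → ℝ)),
        (∀ y ∈ T, Real.sqrt (∑ j, (y j) ^ 2) = 1) →
        ∃ Net : Finset (Fin n → ℝ),
          ↑Net ⊆ T ∧
          (Net.card : ℝ) ≤ Real.exp (C * n) ∧
          ∀ y ∈ T, ∃ y' ∈ Net, ∀ j, |y j - y' j| ≤ 1 / Real.sqrt n := by
  classical
  refine ⟨3, by norm_num, ?_⟩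
  intro n T hT
  rcases Nat.eq_zero_or_pos n with hn | hn
  · subst hn
    refine ⟨∅, by simp, by simpa using Real.exp_nonneg 0, ?_⟩
    intro y hy
    have := hT y hy
    simp at this
  -- now n ≥ 1
  set s : ℝ := Real.sqrt n with hs_def
  have hs_pos : 0 < s := Real.sqrt_pos.mpr (by exact_mod_cast hn)
  have hs_sq : s * s = n := Real.mul_self_sqrt (by positivity)
  have hn1 : (1 : ℝ) ≤ n := by exact_mod_cast hn
  have hs1 : (1 : ℝ) ≤ s := Real.one_le_sqrt.mpr hn1
  have hs_le_n : s ≤ n := by nlinarith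
  -- the rounding map
  set φ : (Fin n → ℝ) → (Fin n → ℤ) := fun y j => round (y j * s) with hφ
  -- basic facts about points of T
  have hsum : ∀ y ∈ T, ∑ j, (y j) ^ 2 = 1 := by
    intro y hy
    exact Real.sqrt_eq_one.mp (hT y hy)
  have habs : ∀ y ∈ T, ∀ j, |y j| ≤ 1 := by
    intro y hy j
    have h1 : (y j) ^ 2 ≤ 1 := by
      rw [← hsum y hy]
      exact Finset.single_le_sum (fun i _ => sq_nonneg (y i)) (Finset.mem_univ j)
    nlinarith [abs_nonneg (y j), sq_abs (y j)]
  have hround : ∀ y : Fin n → ℝ, ∀ j, |y j * s - (φ y j : ℝ)| ≤ 1 / 2 := by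
    intro y j
    exact abs_sub_round (y j * s)
  -- coordinate bound
  have hcoord : ∀ y ∈ T, ∀ j, |φ y j| ≤ 2 * n := by
    intro y hy j
    have h1 : |(φ y j : ℝ)| ≤ |y j * s| + 1 / 2 := by
      have h0 := abs_sub_abs_le_abs_sub ((φ y j : ℝ)) (y j * s)
      rw [abs_sub_comm] at h0
      linarith [hround y j]
    have h2 : |y j * s| ≤ s := by
      rw [abs_mul, abs_of_pos hs_pos]
      nlinarith [habs y hy j, hs_pos]
    have h3 : |(φ y j : ℝ)| ≤ 2 * n := by nlinarith
    have : ((|φ y j| : ℤ) : ℝ) ≤ ((2 * n : ℤ) : ℝ) := by push_cast; simpa using h3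
    exact_mod_cast this
  -- ℓ¹ bound
  have hl1 : ∀ y ∈ T, ∑ j, (φ y j).natAbs ≤ 2 * n := by
    intro y hy
    have hsum1 : ∑ j, |y j| ≤ s := by
      rw [hs_def, Real.le_sqrt (Finset.sum_nonneg fun i _ => abs_nonneg _) (by positivity)]
      calc (∑ j, |y j|) ^ 2 ≤ (Finset.univ : Finset (Fin n)).card * ∑ j, |y j| ^ 2 :=
            sq_sum_le_card_mul_sum_sq
        _ = n := by
            simp only [Finset.card_univ, Fintype.card_fin, sq_abs]
            rw [hsum y hy, mul_one]
    have hreal : (∑ j, ((φ y j).natAbs : ℝ)) ≤ 2 * n := by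
      have hterm : ∀ j : Fin n, ((φ y j).natAbs : ℝ) ≤ |y j| * s + 1 / 2 := by
        intro j
        have h1 := hround y j
        have h2 : ((φ y j).natAbs : ℝ) = |(φ y j : ℝ)| := by
          rw [Nat.cast_natAbs]
          push_cast
          rfl
        have h0 := abs_sub_abs_le_abs_sub ((φ y j : ℝ)) (y j * s)
        rw [abs_sub_comm] at h0
        have h4 : |y j * s| = |y j| * s := by rw [abs_mul, abs_of_pos hs_pos]
        rw [h2]
        linarith
      calc (∑ j, ((φ y j).natAbs : ℝ)) ≤ ∑ j : Fin n, (|y j| * s + 1 / 2) :=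
            Finset.sum_le_sum fun j _ => hterm j
        _ = (∑ j, |y j|) * s + n * (1 / 2) := by
            rw [Finset.sum_add_distrib, ← Finset.sum_mul]
            simp
        _ ≤ s * s + n * (1 / 2) := by nlinarith [hs_pos]
        _ ≤ 2 * n := by rw [hs_sq]; nlinarith
    have : ((∑ j, (φ y j).natAbs : ℕ) : ℝ) ≤ ((2 * n : ℕ) : ℝ) := by push_cast; simpa using hreal
    exact_mod_cast this
  -- the finset of admissible lattice points
  set K : Finset (Fin n → ℤ) :=
    (Fintype.piFinset fun _ : Fin n => Finset.Icc (-(2 * n : ℤ)) (2 * n)).filter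
      (fun k => ∑ j, (k j).natAbs ≤ 2 * n) with hK_def
  have hφK : ∀ y ∈ T, φ y ∈ K := by
    intro y hy
    rw [hK_def, Finset.mem_filter]
    constructor
    · rw [Fintype.mem_piFinset]
      intro j
      rw [Finset.mem_Icc]
      have := hcoord y hy j
      constructor <;> [linarith [neg_abs_le (φ y j)]; linarith [le_abs_self (φ y j)]]
    · exact hl1 y hy
  -- net construction
  set g : (Fin n → ℤ) → (Fin n → ℝ) := fun k =>
    if h : ∃ y ∈ T, φ y = k then h.choose else 0 with hg
  set Net : Finset (Fin n → ℝ) :=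
    (K.filter fun k => ∃ y ∈ T, φ y = k).image g with hNet
  have hgmem : ∀ k, (h : ∃ y ∈ T, φ y = k) → g k ∈ T ∧ φ (g k) = k := by
    intro k h
    rw [hg]
    simp only [dif_pos h]
    exact ⟨h.choose_spec.1, h.choose_spec.2⟩
  refine ⟨Net, ?_, ?_, ?_⟩
  · -- Net ⊆ T
    intro x hx
    rw [hNet] at hx
    simp only [Finset.coe_image, Set.mem_image, Finset.mem_coe, Finset.mem_filter] at hx
    obtain ⟨k, ⟨-, hex⟩, rfl⟩ := hx
    exact (hgmem k hex).1
  · -- cardinality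
    have h1 : Net.card ≤ K.card := by
      rw [hNet]
      exact (Finset.card_image_le).trans (Finset.card_filter_le _ _)
    have h2 : K.card ≤ 2 ^ n * ((n + 1) + 2 * n - 1).choose (2 * n) := by
      apply card_lattice_le
      intro k hk
      rw [hK_def, Finset.mem_filter] at hk
      exact hk.2
    have h3 : ((n + 1) + 2 * n - 1).choose (2 * n) ≤ 2 ^ (3 * n) := by
      have : (n + 1) + 2 * n - 1 = 3 * n := by omega
      rw [this]
      exact choose_le_two_pow_aux (3 * n) (2 * n)
    have h4 : (Net.card : ℝ) ≤ (2 : ℝ) ^ (4 * n) := by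
      have : Net.card ≤ 2 ^ (4 * n) := by
        calc Net.card ≤ 2 ^ n * ((n + 1) + 2 * n - 1).choose (2 * n) := h1.trans h2
          _ ≤ 2 ^ n * 2 ^ (3 * n) := Nat.mul_le_mul_left _ h3
          _ = 2 ^ (4 * n) := by rw [← pow_add]; ring_nf
      exact_mod_cast this
    refine h4.trans ?_
    have h5 : (2 : ℝ) ^ (4 * n) = Real.exp ((4 * n) * Real.log 2) := by
      rw [← Real.exp_log (by positivity : (0:ℝ) < (2:ℝ) ^ (4*n)), Real.log_pow]
      push_cast
      ring_nf
    rw [h5]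
    apply Real.exp_le_exp.mpr
    have hlog : Real.log 2 < 0.6931471808 := Real.log_two_lt_d9
    have hn0 : (0 : ℝ) ≤ n := Nat.cast_nonneg n
    nlinarith
  · -- net property
    intro y hy
    have hk : φ y ∈ K := hφK y hy
    have hex : ∃ z ∈ T, φ z = φ y := ⟨y, hy, rfl⟩
    refine ⟨g (φ y), ?_, ?_⟩
    · rw [hNet]
      exact Finset.mem_image_of_mem g (Finset.mem_filter.mpr ⟨hk, hex⟩)
    · intro j
      obtain ⟨hgT, hgφ⟩ := hgmem (φ y) hex
      have h1 := hround y j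
      have h2 := hround (g (φ y)) j
      rw [hgφ] at h2
      have h3 : |y j * s - g (φ y) j * s| ≤ 1 := by
        calc |y j * s - g (φ y) j * s|
            = |(y j * s - (φ y j : ℝ)) - (g (φ y) j * s - (φ y j : ℝ))| := by ring_nf
          _ ≤ |y j * s - (φ y j : ℝ)| + |g (φ y) j * s - (φ y j : ℝ)| := abs_sub _ _
          _ ≤ 1 / 2 + 1 / 2 := add_le_add h1 h2
          _ = 1 := by norm_num
    -- divide by s
      have h4 : |y j - g (φ y) j| * s ≤ 1 := by
        calc |y j - g (φ y) j| * s = |y j - g (φ y) j| * |s| := by rw [abs_of_pos hs_pos]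
          _ = |(y j - g (φ y) j) * s| := (abs_mul _ _).symm
          _ = |y j * s - g (φ y) j * s| := by ring_nf
          _ ≤ 1 := h3
      rw [le_div_iff₀ hs_pos]
      exact h4
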